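/- For all γ ∈ (0,1) and all b > 0, (γb/(γb+1))^γ ≥ b/(b+1). -/

import Mathlib

theorem pgss_key_inequality (γ b : ℝ) (hγ0 : 0 < γ) (hγ1 : γ < 1) (hb : 0 < b) :
    (γ * b / (γ * b + 1)) ^ γ ≥ b / (b + 1) := by
  have hgb : 0 < γ * b := mul_pos hγ0 hb
  have key : (1 + 1/(γ*b)) ^ γ ≤ 1 + γ * (1/(γ*b)) :=
    rpow_one_add_le_one_add_mul_self
      (le_trans (by norm_num) (by positivity : (0:ℝ) ≤ 1/(γ*b))) hγ0.le hγ1.le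
  have h1 : 1 + γ * (1/(γ*b)) = (b+1)/b := by field_simp
  have h2 : 1 + 1/(γ*b) = (γ*b+1)/(γ*b) := by field_simp
  rw [h1, h2] at key
  have hpos : 0 < ((γ*b+1)/(γ*b) : ℝ) ^ γ := Real.rpow_pos_of_pos (by positivity) _
  have : b/(b+1) = ((b+1)/b)⁻¹ := by field_simp
  rw [this, ge_iff_le]
  calc ((b+1)/b)⁻¹ ≤ (((γ*b+1)/(γ*b)) ^ γ)⁻¹ := by
        apply inv_anti₀ hpos key
    _ = (γ*b/(γ*b+1)) ^ γ := by
        rw [← Real.inv_rpow (by positivity), inv_div]
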